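/- Assume the two-ends hairbrush estimate in ℝ³: for every ε>0 and every (ε₁,ε₂)-two-ends, λ-dense, 1-parallel δ-separated family (L,Y)_δ, |E_L| ≥ c_ε δ^ε δ^{3ε₁/4} λ^{3/4} δ^{1/2} Σ_ℓ |Y(ℓ)|. Then for an m-parallel family (L,Y)_δ with the same shading hypotheses, |E_L| ≳ δ^{7ε₁/8} m^{-1} λ^{3/4} δ^{1/2} Σ_{ℓ∈L}|Y(ℓ)| up to δ^{-ε} losses, by passing to a maximal directionally δ-separated subfamily L' ⊆ L maximizing shading measure in each direction cap, which satisfies Σ_{ℓ∈L'}|Y(ℓ)| ≳ m^{-1} Σ_{ℓ∈L}|Y(ℓ)|. -/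

import Mathlib

open Metric Set MeasureTheory
open scoped Classical

noncomputable section

/-- The line through `a` with direction `d`. -/
def lineSet {n : ℕ} (a d : EuclideanSpace ℝ (Fin n)) : Set (EuclideanSpace ℝ (Fin n)) :=
  {x | ∃ t : ℝ, x = a + t • d}

/-- The `δ`-neighborhood `N_δ(ℓ) ∩ B(0,1)` of the line through `a` with direction `d`. -/
def lineNbhd {n : ℕ} (δ : ℝ) (a d : EuclideanSpace ℝ (Fin n)) :
    Set (EuclideanSpace ℝ (Fin n)) :=
  Metric.thickening δ (lineSet a d) ∩ Metric.ball 0 1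

/-- A `δ × len`-tube segment of `N_δ(ℓ)`, at position `t₀` along the line. -/
def tubeSeg {n : ℕ} (δ len : ℝ) (a d : EuclideanSpace ℝ (Fin n)) (t₀ : ℝ) :
    Set (EuclideanSpace ℝ (Fin n)) :=
  lineNbhd δ a d ∩ {x | (inner ℝ (x - a) d : ℝ) ∈ Set.Icc t₀ (t₀ + len)}

/-- `Y` is an `(ε₁, ε₂, C)`-two-ends shading of the line through `a` with direction `d`:
every `δ × δ^{ε₁}`-tube segment carries at most a `C δ^{ε₂}` fraction of `|Y|`. -/
def TwoEndsShading {n : ℕ} (δ ε₁ ε₂ C : ℝ) (a d : EuclideanSpace ℝ (Fin n))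
    (Y : Set (EuclideanSpace ℝ (Fin n))) : Prop :=
  ∀ t₀ : ℝ, volume (Y ∩ tubeSeg δ (δ ^ ε₁) a d t₀) ≤ ENNReal.ofReal (C * δ ^ ε₂) * volume Y

/-- Greedy construction of a directionally `δ`-separated dominating subfamily. -/
lemma greedy_sep {ι : Type} {δ : ℝ} (hδ : 0 < δ) (d : ι → EuclideanSpace ℝ (Fin 3))
    (w : ι → ENNReal) (L : Finset ι) :
    ∃ L' ⊆ L, (∀ i ∈ L', ∀ j ∈ L', i ≠ j → δ ≤ dist (d i) (d j)) ∧
      ∀ i ∈ L, ∃ j ∈ L', dist (d i) (d j) ≤ δ ∧ w i ≤ w j := by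
  induction L using Finset.strongInductionOn with
  | _ L ih =>
    rcases L.eq_empty_or_nonempty with rfl | hne
    · exact ⟨∅, Finset.Subset.refl _, by simp, by simp⟩
    obtain ⟨j, hjL, hjmax⟩ := L.exists_max_image w hne
    set L₀ := L.filter (fun i => δ ≤ dist (d i) (d j)) with hL₀
    have hjnot : j ∉ L₀ := by simp [hL₀, hδ.not_ge]
    have hssub : L₀ ⊂ L := ⟨Finset.filter_subset _ _, fun h => hjnot (h hjL)⟩
    obtain ⟨L'', hsub'', hsep'', hdom''⟩ := ih L₀ hssub
    have hL''L₀ : ∀ i ∈ L'', δ ≤ dist (d i) (d j) := fun i hi =>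
      (Finset.mem_filter.mp (hsub'' hi)).2
    have hjnot'' : j ∉ L'' := fun h => hjnot (hsub'' h)
    refine ⟨insert j L'', ?_, ?_, ?_⟩
    · intro i hi
      rcases Finset.mem_insert.mp hi with rfl | hi
      · exact hjL
      · exact (Finset.filter_subset _ _) (hsub'' hi)
    · intro i hi k hk hne'
      rcases Finset.mem_insert.mp hi with hi' | hi'
      · rcases Finset.mem_insert.mp hk with hk' | hk'
        · exact absurd (hi'.trans hk'.symm) hne'
        · rw [hi', dist_comm]; exact hL''L₀ k hk'
      · rcases Finset.mem_insert.mp hk with hk' | hk'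
        · rw [hk']; exact hL''L₀ i hi'
        · exact hsep'' i hi' k hk' hne'
    · intro i hi
      by_cases h : δ ≤ dist (d i) (d j)
      · obtain ⟨j', hj', hd', hw'⟩ := hdom'' i (Finset.mem_filter.mpr ⟨hi, h⟩)
        exact ⟨j', Finset.mem_insert_of_mem hj', hd', hw'⟩
      · exact ⟨j, Finset.mem_insert_self _ _, (not_le.mp h).le, hjmax i hi⟩

/-- Counting lemma: the dominated family has at most `m` times the total weight. -/
lemma sum_le_cap {ι : Type} {δ m : ℝ} (hm0 : 0 ≤ m) (d : ι → EuclideanSpace ℝ (Fin 3))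
    (w : ι → ENNReal) (L L' : Finset ι)
    (hdom : ∀ i ∈ L, ∃ j ∈ L', dist (d i) (d j) ≤ δ ∧ w i ≤ w j)
    (hcap : ∀ v : EuclideanSpace ℝ (Fin 3),
      ((L.filter fun i => dist (d i) v ≤ δ).card : ℝ) ≤ m) :
    ∑ i ∈ L, w i ≤ ENNReal.ofReal m * ∑ j ∈ L', w j := by
  classical
  set f : ι → ι := fun i => if h : i ∈ L then (hdom i h).choose else i with hf
  have hfspec : ∀ i ∈ L, f i ∈ L' ∧ dist (d i) (d (f i)) ≤ δ ∧ w i ≤ w (f i) := by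
    intro i hi
    simp only [hf, dif_pos hi]
    obtain ⟨h1, h2, h3⟩ := (hdom i hi).choose_spec
    exact ⟨h1, h2, h3⟩
  calc ∑ i ∈ L, w i ≤ ∑ i ∈ L, w (f i) :=
        Finset.sum_le_sum fun i hi => (hfspec i hi).2.2
    _ = ∑ j ∈ L', ∑ i ∈ L.filter (fun i => f i = j), w (f i) :=
        (Finset.sum_fiberwise_of_maps_to (fun i hi => (hfspec i hi).1) _).symm
    _ ≤ ∑ j ∈ L', ENNReal.ofReal m * w j := by
        refine Finset.sum_le_sum fun j hj => ?_
        have heq : ∑ i ∈ L.filter (fun i => f i = j), w (f i)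
            = ((L.filter (fun i => f i = j)).card : ENNReal) * w j := by
          rw [Finset.sum_congr rfl (fun i hi => by
            rw [(Finset.mem_filter.mp hi).2]), Finset.sum_const, nsmul_eq_mul]
        rw [heq]
        refine mul_le_mul_left ?_ _
        have hsub : L.filter (fun i => f i = j) ⊆ L.filter (fun i => dist (d i) (d j) ≤ δ) := by
          intro i hi
          obtain ⟨hiL, hfi⟩ := Finset.mem_filter.mp hi
          exact Finset.mem_filter.mpr ⟨hiL, hfi ▸ (hfspec i hiL).2.1⟩
        have h1 : ((L.filter (fun i => f i = j)).card : ℝ) ≤ m :=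
          le_trans (by exact_mod_cast Finset.card_le_card hsub) (hcap (d j))
        calc ((L.filter (fun i => f i = j)).card : ENNReal)
            = ENNReal.ofReal ((L.filter (fun i => f i = j)).card : ℝ) := by
              rw [ENNReal.ofReal_natCast]
          _ ≤ ENNReal.ofReal m := ENNReal.ofReal_le_ofReal h1
    _ = ENNReal.ofReal m * ∑ j ∈ L', w j := by rw [Finset.mul_sum]

/-- Assuming the two-ends hairbrush estimate in `ℝ³` for `1`-parallel families, the same
estimate holds for `m`-parallel families with an extra factor `m⁻¹` (and `δ^{7ε₁/8}`), via a
directionally separated subfamily `L'` carrying at least an `m⁻¹` fraction of the shading. -/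
theorem stmt13 (C : ℝ) (hC : 1 ≤ C)
    (hairbrush : ∀ ε > (0:ℝ), ∃ c > (0:ℝ),
      ∀ (δ ε₁ ε₂ lam : ℝ) (ι : Type) (L : Finset ι)
        (a d : ι → EuclideanSpace ℝ (Fin 3)) (Y : ι → Set (EuclideanSpace ℝ (Fin 3))),
        δ ∈ Set.Ioo (0:ℝ) 1 → 0 < ε₂ → ε₂ < ε₁ → ε₁ < 1 → 0 < lam → lam ≤ 1 →
        (∀ i, ‖d i‖ = 1) →
        (∀ i ∈ L, Y i ⊆ lineNbhd δ (a i) (d i)) →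
        (∀ i ∈ L, ∀ j ∈ L, i ≠ j → δ ≤ dist (d i) (d j)) →
        (∀ i ∈ L, TwoEndsShading δ ε₁ ε₂ C (a i) (d i) (Y i)) →
        (∀ i ∈ L, ENNReal.ofReal lam * volume (lineNbhd δ (a i) (d i)) ≤ volume (Y i)) →
        ENNReal.ofReal (c * δ ^ ε * δ ^ (3 * ε₁ / 4) * lam ^ ((3:ℝ)/4) * δ ^ ((1:ℝ)/2)) *
            (∑ i ∈ L, volume (Y i))
          ≤ volume (⋃ i ∈ L, Y i)) :
    ∀ ε > (0:ℝ), ∃ c > (0:ℝ),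
      ∀ (δ ε₁ ε₂ lam m : ℝ) (ι : Type) (L : Finset ι)
        (a d : ι → EuclideanSpace ℝ (Fin 3)) (Y : ι → Set (EuclideanSpace ℝ (Fin 3))),
        δ ∈ Set.Ioo (0:ℝ) 1 → 0 < ε₂ → ε₂ < ε₁ → ε₁ < 1 → 0 < lam → lam ≤ 1 → 1 ≤ m →
        (∀ i, ‖d i‖ = 1) →
        (∀ i ∈ L, Y i ⊆ lineNbhd δ (a i) (d i)) →
        -- `L` is `δ`-separated
        (∀ i ∈ L, ∀ j ∈ L, i ≠ j → δ ≤ dist (a i) (a j) + dist (d i) (d j)) →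
        -- `L` is `m`-parallel
        (∀ v : EuclideanSpace ℝ (Fin 3),
          ((L.filter fun i => dist (d i) v ≤ δ).card : ℝ) ≤ m) →
        (∀ i ∈ L, TwoEndsShading δ ε₁ ε₂ C (a i) (d i) (Y i)) →
        (∀ i ∈ L, ENNReal.ofReal lam * volume (lineNbhd δ (a i) (d i)) ≤ volume (Y i)) →
        -- the directionally separated subfamily carrying an `m⁻¹` fraction of the shading
        (∃ L' ⊆ L, (∀ i ∈ L', ∀ j ∈ L', i ≠ j → δ ≤ dist (d i) (d j)) ∧
          ENNReal.ofReal (c * m⁻¹) * (∑ i ∈ L, volume (Y i))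
            ≤ ∑ i ∈ L', volume (Y i)) ∧
        -- the resulting `m`-parallel two-ends hairbrush estimate
        ENNReal.ofReal (c * δ ^ ε * δ ^ (7 * ε₁ / 8) * m⁻¹ * lam ^ ((3:ℝ)/4) * δ ^ ((1:ℝ)/2)) *
            (∑ i ∈ L, volume (Y i))
          ≤ volume (⋃ i ∈ L, Y i) := by
  intro ε hε
  obtain ⟨c, hc, H⟩ := hairbrush ε hε
  refine ⟨min c 1, lt_min hc one_pos, ?_⟩
  intro δ ε₁ ε₂ lam m ι L a d Y hδ hε₂ hε₁₂ hε₁ hlam hlam1 hm hd hY _hsep hcap htwo hdense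
  have hδ0 : 0 < δ := hδ.1
  have hδ1 : δ < 1 := hδ.2
  have hm0 : (0:ℝ) < m := lt_of_lt_of_le one_pos hm
  obtain ⟨L', hsubL', hdirsep, hdom⟩ := greedy_sep hδ0 d (fun i => volume (Y i)) L
  have hsum : ∑ i ∈ L, volume (Y i) ≤ ENNReal.ofReal m * ∑ j ∈ L', volume (Y j) :=
    sum_le_cap hm0.le d _ L L' hdom hcap
  have hfrac : ENNReal.ofReal m⁻¹ * ∑ i ∈ L, volume (Y i) ≤ ∑ j ∈ L', volume (Y j) := by
    calc ENNReal.ofReal m⁻¹ * ∑ i ∈ L, volume (Y i)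
        ≤ ENNReal.ofReal m⁻¹ * (ENNReal.ofReal m * ∑ j ∈ L', volume (Y j)) :=
          mul_le_mul_right hsum _
      _ = ∑ j ∈ L', volume (Y j) := by
          rw [← mul_assoc, ← ENNReal.ofReal_mul (by positivity),
            inv_mul_cancel₀ hm0.ne', ENNReal.ofReal_one, one_mul]
  constructor
  · refine ⟨L', hsubL', hdirsep, le_trans (mul_le_mul_left ?_ _) hfrac⟩
    exact ENNReal.ofReal_le_ofReal
      (mul_le_of_le_one_left (by positivity) (min_le_right c 1))
  · have hmain := H δ ε₁ ε₂ lam ι L' a d Y hδ hε₂ hε₁₂ hε₁ hlam hlam1 hd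
      (fun i hi => hY i (hsubL' hi)) hdirsep
      (fun i hi => htwo i (hsubL' hi)) (fun i hi => hdense i (hsubL' hi))
    have hunion : volume (⋃ i ∈ L', Y i) ≤ volume (⋃ i ∈ L, Y i) := by
      apply measure_mono
      exact Set.iUnion₂_subset fun i hi => Set.subset_biUnion_of_mem (hsubL' hi)
    have h78 : δ ^ (7 * ε₁ / 8) ≤ δ ^ (3 * ε₁ / 4) :=
      Real.rpow_le_rpow_of_exponent_ge hδ0 hδ1.le (by linarith)
    have hreal : min c 1 * δ ^ ε * δ ^ (7 * ε₁ / 8) * m⁻¹ * lam ^ ((3:ℝ)/4) * δ ^ ((1:ℝ)/2)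
        ≤ (c * δ ^ ε * δ ^ (3 * ε₁ / 4) * lam ^ ((3:ℝ)/4) * δ ^ ((1:ℝ)/2)) * m⁻¹ := by
      have key : min c 1 * δ ^ (7 * ε₁ / 8) ≤ c * δ ^ (3 * ε₁ / 4) :=
        mul_le_mul (min_le_left _ _) h78 (by positivity) hc.le
      calc min c 1 * δ ^ ε * δ ^ (7 * ε₁ / 8) * m⁻¹ * lam ^ ((3:ℝ)/4) * δ ^ ((1:ℝ)/2)
          = (min c 1 * δ ^ (7 * ε₁ / 8)) *
              (δ ^ ε * m⁻¹ * lam ^ ((3:ℝ)/4) * δ ^ ((1:ℝ)/2)) := by ring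
        _ ≤ (c * δ ^ (3 * ε₁ / 4)) *
              (δ ^ ε * m⁻¹ * lam ^ ((3:ℝ)/4) * δ ^ ((1:ℝ)/2)) :=
            mul_le_mul_of_nonneg_right key (by positivity)
        _ = (c * δ ^ ε * δ ^ (3 * ε₁ / 4) * lam ^ ((3:ℝ)/4) * δ ^ ((1:ℝ)/2)) * m⁻¹ := by ring
    calc ENNReal.ofReal (min c 1 * δ ^ ε * δ ^ (7 * ε₁ / 8) * m⁻¹ * lam ^ ((3:ℝ)/4) *
            δ ^ ((1:ℝ)/2)) * (∑ i ∈ L, volume (Y i))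
        ≤ ENNReal.ofReal ((c * δ ^ ε * δ ^ (3 * ε₁ / 4) * lam ^ ((3:ℝ)/4) * δ ^ ((1:ℝ)/2)) *
            m⁻¹) * (∑ i ∈ L, volume (Y i)) :=
          mul_le_mul_left (ENNReal.ofReal_le_ofReal hreal) _
      _ = ENNReal.ofReal (c * δ ^ ε * δ ^ (3 * ε₁ / 4) * lam ^ ((3:ℝ)/4) * δ ^ ((1:ℝ)/2)) *
            (ENNReal.ofReal m⁻¹ * ∑ i ∈ L, volume (Y i)) := by
          rw [ENNReal.ofReal_mul (by positivity), mul_assoc]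
      _ ≤ ENNReal.ofReal (c * δ ^ ε * δ ^ (3 * ε₁ / 4) * lam ^ ((3:ℝ)/4) * δ ^ ((1:ℝ)/2)) *
            (∑ j ∈ L', volume (Y j)) := mul_le_mul_right hfrac _
      _ ≤ volume (⋃ i ∈ L', Y i) := hmain
      _ ≤ volume (⋃ i ∈ L, Y i) := hunion
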